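/- Assume the SETUP with the f_i of class C², conditions G1–G3, H1–H5, and the distortion condition (D2) sup_i sup_{z∈E_i} |D²f_i(z)|/|f_{i1x}(z)| < C₀, where |D²f_i(z)| is the maximum of the absolute values of all second-order partial derivatives of f_{i1} and f_{i2} at z. Then there exists a constant c > 0, independent of i, such that for every i and all z₁, z₂ ∈ E_i, δ_{z₁}(E_i) ≤ c·δ_{z₂}(E_i), where δ_z(E_i) is the diameter of the intersection of E_i with the horizontal line through z. -/

import Mathlib

open MeasureTheory Set Filter Topology

noncomputable section

/-- The unit square `Q = [0,1] × [0,1]`. -/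
def Q2 : Set (ℝ × ℝ) := Set.Icc (0:ℝ) 1 ×ˢ Set.Icc (0:ℝ) 1

/-- The full-height curvilinear rectangle `E_i` with left/right boundaries `l i`, `r i`. -/
def Erect (l r : ℕ → ℝ → ℝ) (i : ℕ) : Set (ℝ × ℝ) :=
  {p : ℝ × ℝ | p.2 ∈ Set.Icc (0:ℝ) 1 ∧ l i p.2 ≤ p.1 ∧ p.1 ≤ r i p.2}

/-- The full-width strip `S_i` with bottom/top boundaries `b i`, `t i`. -/
def Sstrip (b t : ℕ → ℝ → ℝ) (i : ℕ) : Set (ℝ × ℝ) :=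
  {p : ℝ × ℝ | p.1 ∈ Set.Icc (0:ℝ) 1 ∧ b i p.1 ≤ p.2 ∧ p.2 ≤ t i p.1}

/-- The map `f_i = (f_{i1}, f_{i2})` as a map `ℝ² → ℝ²`. -/
def fv (f1 f2 : ℕ → ℝ × ℝ → ℝ) (i : ℕ) (p : ℝ × ℝ) : ℝ × ℝ := (f1 i p, f2 i p)

/-- Partial derivative in the `x`-direction. -/
def Dx (g : ℝ × ℝ → ℝ) (z : ℝ × ℝ) : ℝ := deriv (fun s => g (s, z.2)) z.1

/-- Partial derivative in the `y`-direction. -/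
def Dy (g : ℝ × ℝ → ℝ) (z : ℝ × ℝ) : ℝ := deriv (fun s => g (z.1, s)) z.2

/-- Absolute value of the Jacobian determinant of `f_i`. -/
def Jac (f1 f2 : ℕ → ℝ × ℝ → ℝ) (i : ℕ) (z : ℝ × ℝ) : ℝ :=
  |Dx (f1 i) z * Dy (f2 i) z - Dy (f1 i) z * Dx (f2 i) z|

/-- Maximum of the absolute values of the second-order partial derivatives of `f_i`. -/
def D2max (f1 f2 : ℕ → ℝ × ℝ → ℝ) (i : ℕ) (z : ℝ × ℝ) : ℝ :=
  max (max (max |Dx (Dx (f1 i)) z| |Dy (Dx (f1 i)) z|)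
           (max |Dy (Dy (f1 i)) z| |Dx (Dx (f2 i)) z|))
      (max |Dy (Dx (f2 i)) z| |Dy (Dy (f2 i)) z|)

/-- `δ_{i,max}`: maximal width of a horizontal cross-section of `E_i`. -/
def deltaMax (l r : ℕ → ℝ → ℝ) (i : ℕ) : ℝ :=
  sSup ((fun y => r i y - l i y) '' Set.Icc (0:ℝ) 1)

/-- `δ_{i,min}`: minimal width of a horizontal cross-section of `E_i`. -/
def deltaMin (l r : ℕ → ℝ → ℝ) (i : ℕ) : ℝ :=
  sInf ((fun y => r i y - l i y) '' Set.Icc (0:ℝ) 1)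

/-- `E_{i₀ … i_{n-1}} = E_{i₀} ∩ f_{i₀}⁻¹ (E_{i₁ … i_{n-1}})`. -/
def Efin (l r : ℕ → ℝ → ℝ) (f1 f2 : ℕ → ℝ × ℝ → ℝ) : (ℕ → ℕ) → ℕ → Set (ℝ × ℝ)
  | _, 0 => Set.univ
  | idx, n + 1 =>
      Erect l r (idx 0) ∩ fv f1 f2 (idx 0) ⁻¹' Efin l r f1 f2 (fun k => idx (k + 1)) n

/-- `S_{i₋ₘ … i₋₁} = f_{i₋₁} (S_{i₋ₘ … i₋₂} ∩ E_{i₋₁})`; here `j 0 = i₋₁`, `j 1 = i₋₂`, …. -/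
def Sfin (l r : ℕ → ℝ → ℝ) (f1 f2 : ℕ → ℝ × ℝ → ℝ) : (ℕ → ℕ) → ℕ → Set (ℝ × ℝ)
  | _, 0 => Set.univ
  | j, m + 1 =>
      fv f1 f2 (j 0) '' (Sfin l r f1 f2 (fun k => j (k + 1)) m ∩ Erect l r (j 0))

/-- The topological attractor `Λ`, the union of all the unstable curves. -/
def Attractor (l r : ℕ → ℝ → ℝ) (f1 f2 : ℕ → ℝ × ℝ → ℝ) : Set (ℝ × ℝ) :=
  ⋃ j : ℕ → ℕ, ⋂ m : ℕ, Sfin l r f1 f2 j (m + 1)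

namespace BWR

lemma hasDerivAt_dx {g : ℝ × ℝ → ℝ} {z : ℝ × ℝ} (hg : DifferentiableAt ℝ g z) :
    HasDerivAt (fun s => g (s, z.2)) (fderiv ℝ g z (1, 0)) z.1 := by
  have h1 : HasDerivAt (fun s : ℝ => ((s, z.2) : ℝ × ℝ)) ((1 : ℝ), (0 : ℝ)) z.1 :=
    (hasDerivAt_id z.1).prodMk (hasDerivAt_const z.1 z.2)
  have h2 : HasFDerivAt g (fderiv ℝ g z) ((z.1, z.2) : ℝ × ℝ) := by
    rw [Prod.mk.eta]; exact hg.hasFDerivAt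
  exact h2.comp_hasDerivAt z.1 h1

lemma hasDerivAt_dy {g : ℝ × ℝ → ℝ} {z : ℝ × ℝ} (hg : DifferentiableAt ℝ g z) :
    HasDerivAt (fun s => g (z.1, s)) (fderiv ℝ g z (0, 1)) z.2 := by
  have h1 : HasDerivAt (fun s : ℝ => ((z.1, s) : ℝ × ℝ)) ((0 : ℝ), (1 : ℝ)) z.2 :=
    (hasDerivAt_const z.2 z.1).prodMk (hasDerivAt_id z.2)
  have h2 : HasFDerivAt g (fderiv ℝ g z) ((z.1, z.2) : ℝ × ℝ) := by
    rw [Prod.mk.eta]; exact hg.hasFDerivAt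
  exact h2.comp_hasDerivAt z.2 h1

lemma Dx_eq {g : ℝ × ℝ → ℝ} {z : ℝ × ℝ} (hg : DifferentiableAt ℝ g z) :
    Dx g z = fderiv ℝ g z (1, 0) := (hasDerivAt_dx hg).deriv

lemma Dy_eq {g : ℝ × ℝ → ℝ} {z : ℝ × ℝ} (hg : DifferentiableAt ℝ g z) :
    Dy g z = fderiv ℝ g z (0, 1) := (hasDerivAt_dy hg).deriv

lemma hasDerivAt_Dx {g : ℝ × ℝ → ℝ} {z : ℝ × ℝ} (hg : DifferentiableAt ℝ g z) :
    HasDerivAt (fun s => g (s, z.2)) (Dx g z) z.1 := by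
  rw [Dx_eq hg]; exact hasDerivAt_dx hg

lemma fderiv_apply_pt {g : ℝ × ℝ → ℝ} {z : ℝ × ℝ} (hg : DifferentiableAt ℝ g z) (v : ℝ × ℝ) :
    fderiv ℝ g z v = v.1 * Dx g z + v.2 * Dy g z := by
  rw [Dx_eq hg, Dy_eq hg]
  have hv : v = v.1 • ((1 : ℝ), (0 : ℝ)) + v.2 • ((0 : ℝ), (1 : ℝ)) := by
    ext <;> simp
  conv_lhs => rw [hv]
  rw [map_add, _root_.map_smul, _root_.map_smul, smul_eq_mul, smul_eq_mul]

end BWR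

namespace BWR2
open BWR

lemma hasDerivAt_along {g : ℝ × ℝ → ℝ} {c : ℝ → ℝ} {c' y : ℝ}
    (hg : DifferentiableAt ℝ g (c y, y)) (hc : HasDerivAt c c' y) :
    HasDerivAt (fun s => g (c s, s)) (c' * Dx g (c y, y) + Dy g (c y, y)) y := by
  have h1 : HasDerivAt (fun s : ℝ => ((c s, s) : ℝ × ℝ)) ((c', 1) : ℝ × ℝ) y :=
    hc.prodMk (hasDerivAt_id y)
  have h2 : HasFDerivAt g (fderiv ℝ g (c y, y)) ((fun s : ℝ => ((c s, s) : ℝ × ℝ)) y) :=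
    hg.hasFDerivAt
  have h3 := HasFDerivAt.comp_hasDerivAt (f := fun s : ℝ => ((c s, s) : ℝ × ℝ)) y h2 h1
  rw [fderiv_apply_pt hg] at h3
  simp only [one_mul] at h3; exact h3

lemma hasDerivAt_horiz {g : ℝ × ℝ → ℝ} {x y : ℝ} (hg : DifferentiableAt ℝ g (x, y)) :
    HasDerivAt (fun s => g (s, y)) (Dx g (x, y)) x := hasDerivAt_Dx hg

def cle (a b c d : ℝ) (h : a * d - b * c ≠ 0) : (ℝ × ℝ) ≃L[ℝ] (ℝ × ℝ) :=
  LinearEquiv.toContinuousLinearEquiv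
    { toFun := fun v => (a * v.1 + b * v.2, c * v.1 + d * v.2)
      map_add' := fun x y => by
        simp only [Prod.fst_add, Prod.snd_add, Prod.mk_add_mk, Prod.mk.injEq]
        constructor <;> ring
      map_smul' := fun m x => by
        simp only [Prod.smul_fst, Prod.smul_snd, smul_eq_mul, Prod.smul_mk, RingHom.id_apply,
          Prod.mk.injEq]
        constructor <;> ring
      invFun := fun v => ((d * v.1 - b * v.2) / (a * d - b * c),
        (a * v.2 - c * v.1) / (a * d - b * c))
      left_inv := fun v => by
        have h' : a * d - b * c ≠ 0 := h
        obtain ⟨v1, v2⟩ := v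
        simp only [Prod.mk.injEq]
        constructor <;> (rw [div_eq_iff h']; ring)
      right_inv := fun v => by
        have h' : a * d - b * c ≠ 0 := h
        obtain ⟨v1, v2⟩ := v
        simp only [Prod.mk.injEq]
        constructor <;> (rw [mul_div_assoc', mul_div_assoc', ← add_div, div_eq_iff h']; ring) }

lemma cle_apply (a b c d : ℝ) (h : a * d - b * c ≠ 0) (v : ℝ × ℝ) :
    (cle a b c d h : (ℝ × ℝ) →L[ℝ] (ℝ × ℝ)) v = (a * v.1 + b * v.2, c * v.1 + d * v.2) := by
  rfl

lemma exists_inj_nbhd (f1 f2 : ℝ × ℝ → ℝ) (z : ℝ × ℝ)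
    (hF : ContDiffAt ℝ 2 (fun w => ((f1 w, f2 w) : ℝ × ℝ)) z)
    (hdet : Dx f1 z * Dy f2 z - Dy f1 z * Dx f2 z ≠ 0) :
    ∃ U : Set (ℝ × ℝ), IsOpen U ∧ z ∈ U ∧ Set.InjOn (fun w => ((f1 w, f2 w) : ℝ × ℝ)) U := by
  have hFd : DifferentiableAt ℝ (fun w => ((f1 w, f2 w) : ℝ × ℝ)) z :=
    hF.differentiableAt (by norm_num)
  have hd1 : DifferentiableAt ℝ f1 z := by
    have := hFd.fst
    simpa using this
  have hd2 : DifferentiableAt ℝ f2 z := by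
    have := hFd.snd
    simpa using this
  have hprod : HasFDerivAt (fun w => ((f1 w, f2 w) : ℝ × ℝ))
      ((fderiv ℝ f1 z).prod (fderiv ℝ f2 z)) z := hd1.hasFDerivAt.prodMk hd2.hasFDerivAt
  have hdet' : Dx f1 z * Dy f2 z - Dy f1 z * Dx f2 z ≠ 0 := hdet
  have hEq : (fderiv ℝ f1 z).prod (fderiv ℝ f2 z)
      = ((cle (Dx f1 z) (Dy f1 z) (Dx f2 z) (Dy f2 z) (by
          intro hc; apply hdet'; linarith [hc])) : (ℝ × ℝ) →L[ℝ] (ℝ × ℝ)) := by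
    apply ContinuousLinearMap.ext
    intro v
    rw [cle_apply]
    rw [ContinuousLinearMap.prod_apply]
    rw [fderiv_apply_pt hd1, fderiv_apply_pt hd2]
    simp [mul_comm]
  have hstrict : HasStrictFDerivAt (fun w => ((f1 w, f2 w) : ℝ × ℝ))
      (((cle (Dx f1 z) (Dy f1 z) (Dx f2 z) (Dy f2 z) (by
          intro hc; apply hdet'; linarith [hc])) : (ℝ × ℝ) ≃L[ℝ] (ℝ × ℝ)) :
        (ℝ × ℝ) →L[ℝ] (ℝ × ℝ)) z := by
    have h := hF.hasStrictFDerivAt (by norm_num)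
    rwa [hprod.fderiv, hEq] at h
  refine ⟨(hstrict.toOpenPartialHomeomorph _).source, (hstrict.toOpenPartialHomeomorph _).open_source,
    hstrict.mem_toOpenPartialHomeomorph_source, ?_⟩
  have := (hstrict.toOpenPartialHomeomorph _).injOn
  rwa [HasStrictFDerivAt.toOpenPartialHomeomorph_coe] at this

lemma mem_interior_of_image {F : ℝ × ℝ → ℝ × ℝ} {E : Set (ℝ × ℝ)} (hEc : IsCompact E)
    (hFc : Continuous F) (hinj : Set.InjOn F E) {z : ℝ × ℝ} (hz : z ∈ E) {U : Set (ℝ × ℝ)}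
    (hU : IsOpen U) (hzU : z ∈ U) (hUinj : Set.InjOn F U)
    (h : F z ∈ interior (F '' E)) : z ∈ interior E := by
  have hK : IsCompact (E \ U) := hEc.diff hU
  have hKim : IsClosed (F '' (E \ U)) := (hK.image hFc).isClosed
  have hzK : F z ∉ F '' (E \ U) := by
    rintro ⟨e, he, heq⟩
    have : e = z := hinj he.1 hz heq
    exact he.2 (this ▸ hzU)
  refine mem_interior.mpr ⟨U ∩ F ⁻¹' ((F '' (E \ U))ᶜ ∩ interior (F '' E)), ?_, ?_, ?_⟩
  · rintro w ⟨hwU, hwV, hwS⟩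
    obtain ⟨e, he, heq⟩ : F w ∈ F '' E := interior_subset hwS
    have heU : e ∈ U := by
      by_contra hne
      exact hwV ⟨e, ⟨he, hne⟩, heq⟩
    rwa [← hUinj heU hwU heq]
  · exact hU.inter (((hKim.isOpen_compl).inter isOpen_interior).preimage hFc)
  · exact ⟨hzU, hzK, h⟩

lemma ball_pt1 (x y d ε : ℝ) (hd : |d| < ε) :
    ((x + d, y) : ℝ × ℝ) ∈ Metric.ball ((x, y) : ℝ × ℝ) ε := by
  rw [Metric.mem_ball, Prod.dist_eq]
  have h1 : dist (x + d) x = |d| := by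
    rw [Real.dist_eq]; congr 1; ring
  rw [h1, dist_self]
  exact max_lt hd ((abs_nonneg d).trans_lt hd)

lemma ball_pt2 (x y d ε : ℝ) (hd : |d| < ε) :
    ((x, y + d) : ℝ × ℝ) ∈ Metric.ball ((x, y) : ℝ × ℝ) ε := by
  rw [Metric.mem_ball, Prod.dist_eq]
  have h1 : dist (y + d) y = |d| := by
    rw [Real.dist_eq]; congr 1; ring
  rw [h1, dist_self]
  exact max_lt ((abs_nonneg d).trans_lt hd) hd

end BWR2

namespace BWR3
open BWR BWR2

theorem corner_aux (b t : ℝ → ℝ) (f1 f2 : ℝ × ℝ → ℝ) (E : Set (ℝ × ℝ))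
    (htcont : Continuous t) (hbcont : Continuous b)
    (htd : Differentiable ℝ t) (hbd : Differentiable ℝ b)
    (hf1d : Differentiable ℝ f1) (hf2d : Differentiable ℝ f2)
    (δ : ℝ) (hδ : 0 < δ) (hgap : ∀ x ∈ Set.Icc (0:ℝ) 1, δ ≤ t x - b x)
    (hbranch : ∀ z ∈ E, z ∉ interior E → f1 z ∈ Set.Ioo (0:ℝ) 1 →
      f2 z = t (f1 z) ∨ f2 z = b (f1 z))
    (x' y' : ℝ) (hz : ((x', y') : ℝ × ℝ) ∈ E)
    (hdetz : Dx f1 (x', y') * Dy f2 (x', y') - Dy f1 (x', y') * Dx f2 (x', y') ≠ 0)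
    (c : ℝ → ℝ) (hc : c y' = x') (hcd : DifferentiableAt ℝ c y')
    (sy : Set ℝ) (hsyU : UniqueDiffWithinAt ℝ sy y') (hsym : y' ∈ sy)
    (hyev : ∀ᶠ y in 𝓝[sy] y', ((c y, y) : ℝ × ℝ) ∈ E ∧ ((c y, y) : ℝ × ℝ) ∉ interior E)
    (sx : Set ℝ) (hsxU : UniqueDiffWithinAt ℝ sx x') (hsxm : x' ∈ sx)
    (hxev : ∀ᶠ x in 𝓝[sx] x', ((x, y') : ℝ × ℝ) ∈ E ∧ ((x, y') : ℝ × ℝ) ∉ interior E)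
    (hκ : f1 (x', y') ∈ Set.Ioo (0:ℝ) 1) : False := by
  set z : ℝ × ℝ := (x', y') with hzdef
  have hzbd : z ∉ interior E := by
    have h := hyev.self_of_nhdsWithin hsym
    rw [hc] at h
    exact h.2
  -- pick the branch τ at z
  obtain ⟨τ, τcont, τdiff, hτz, hsep⟩ :
      ∃ τ : ℝ → ℝ, Continuous τ ∧ Differentiable ℝ τ ∧ f2 z = τ (f1 z) ∧
        (∀ w ∈ E, w ∉ interior E → f1 w ∈ Set.Ioo (0:ℝ) 1 →
          f2 w = τ (f1 w) ∨ δ ≤ |f2 w - τ (f1 w)|) := by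
    rcases hbranch z hz hzbd hκ with h | h
    · refine ⟨t, htcont, htd, h, ?_⟩
      intro w hw hwbd hwκ
      rcases hbranch w hw hwbd hwκ with h' | h'
      · exact Or.inl h'
      · right
        rw [h']
        have := hgap (f1 w) (Set.Ioo_subset_Icc_self hwκ)
        rw [abs_sub_comm, abs_of_nonneg (by linarith)]
        linarith
    · refine ⟨b, hbcont, hbd, h, ?_⟩
      intro w hw hwbd hwκ
      rcases hbranch w hw hwbd hwκ with h' | h'
      · right
        rw [h']
        have := hgap (f1 w) (Set.Ioo_subset_Icc_self hwκ)
        rw [abs_of_nonneg (by linarith)]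
        linarith
      · exact Or.inl h'
  -- eventual branch equality along curves through z
  have claim : ∀ (γ : ℝ → ℝ × ℝ) (w : ℝ) (s : Set ℝ), ContinuousAt γ w → γ w = z →
      (∀ᶠ p in 𝓝[s] w, γ p ∈ E ∧ γ p ∉ interior E) →
      ∀ᶠ p in 𝓝[s] w, f2 (γ p) = τ (f1 (γ p)) := by
    intro γ w s hγc hγw hev
    have hcont : ContinuousAt (fun p => f2 (γ p) - τ (f1 (γ p))) w :=
      ((hf2d.continuous.continuousAt.comp hγc).sub
        (τcont.continuousAt.comp (hf1d.continuous.continuousAt.comp hγc)))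
    have hval : f2 (γ w) - τ (f1 (γ w)) = 0 := by rw [hγw, hτz]; ring
    have hsmall : ∀ᶠ p in 𝓝 w, |f2 (γ p) - τ (f1 (γ p))| < δ := by
      have h0 : Set.Ioo (-δ) δ ∈ 𝓝 (f2 (γ w) - τ (f1 (γ w))) := by
        rw [hval]; exact Ioo_mem_nhds (by linarith) hδ
      filter_upwards [hcont.eventually_mem h0] with p hp
      rw [abs_lt]; exact ⟨hp.1, hp.2⟩
    have hIoo : ∀ᶠ p in 𝓝 w, f1 (γ p) ∈ Set.Ioo (0:ℝ) 1 := by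
      have hc1 : ContinuousAt (fun p => f1 (γ p)) w :=
        hf1d.continuous.continuousAt.comp hγc
      have h0 : Set.Ioo (0:ℝ) 1 ∈ 𝓝 (f1 (γ w)) := by
        rw [hγw]; exact isOpen_Ioo.mem_nhds hκ
      exact hc1.eventually_mem h0
    filter_upwards [hev, hsmall.filter_mono nhdsWithin_le_nhds,
      hIoo.filter_mono nhdsWithin_le_nhds] with p hp hp2 hp3
    rcases hsep (γ p) hp.1 hp.2 hp3 with h | h
    · exact h
    · linarith [hp2, h]
  -- vertical direction
  set c' : ℝ := deriv c y' with hc'def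
  have hγvE : ∀ᶠ y in 𝓝[sy] y', f2 (c y, y) = τ (f1 (c y, y)) := by
    have := claim (fun y => ((c y, y) : ℝ × ℝ)) y' sy
      (hcd.continuousAt.prodMk continuousAt_id) (by simp [hzdef, hc]) hyev
    exact this
  have hκv : HasDerivAt (fun y => f1 (c y, y)) (c' * Dx f1 z + Dy f1 z) y' := by
    have := hasDerivAt_along (g := f1) (hf1d (c y', y')) hcd.hasDerivAt
    rwa [hc] at this
  have hμv : HasDerivAt (fun y => f2 (c y, y)) (c' * Dx f2 z + Dy f2 z) y' := by
    have := hasDerivAt_along (g := f2) (hf2d (c y', y')) hcd.hasDerivAt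
    rwa [hc] at this
  have hτκv : HasDerivAt (fun y => τ (f1 (c y, y)))
      (deriv τ (f1 z) * (c' * Dx f1 z + Dy f1 z)) y' := by
    have hτ : HasDerivAt τ (deriv τ (f1 z)) (f1 ((c y', y') : ℝ × ℝ)) := by
      rw [hc]; exact (τdiff (f1 z)).hasDerivAt
    exact hτ.comp y' hκv
  have hveq : c' * Dx f2 z + Dy f2 z = deriv τ (f1 z) * (c' * Dx f1 z + Dy f1 z) := by
    have h1 : HasDerivWithinAt (fun y => f2 (c y, y)) (c' * Dx f2 z + Dy f2 z) sy y' :=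
      hμv.hasDerivWithinAt
    have h2 : HasDerivWithinAt (fun y => f2 (c y, y))
        (deriv τ (f1 z) * (c' * Dx f1 z + Dy f1 z)) sy y' := by
      refine (hτκv.hasDerivWithinAt).congr_of_eventuallyEq ?_ ?_
      · exact hγvE
      · rw [hc]; exact hτz
    rw [← h1.derivWithin hsyU, ← h2.derivWithin hsyU]
  -- horizontal direction
  have hγhE : ∀ᶠ x in 𝓝[sx] x', f2 (x, y') = τ (f1 (x, y')) := by
    have := claim (fun x => ((x, y') : ℝ × ℝ)) x' sx
      (continuousAt_id.prodMk continuousAt_const) (by simp [hzdef]) hxev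
    exact this
  have hκh : HasDerivAt (fun x => f1 (x, y')) (Dx f1 z) x' := hasDerivAt_horiz (hf1d z)
  have hμh : HasDerivAt (fun x => f2 (x, y')) (Dx f2 z) x' := hasDerivAt_horiz (hf2d z)
  have hτκh : HasDerivAt (fun x => τ (f1 (x, y'))) (deriv τ (f1 z) * Dx f1 z) x' :=
    (τdiff (f1 z)).hasDerivAt.comp x' hκh
  have hheq : Dx f2 z = deriv τ (f1 z) * Dx f1 z := by
    have h1 : HasDerivWithinAt (fun x => f2 (x, y')) (Dx f2 z) sx x' := hμh.hasDerivWithinAt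
    have h2 : HasDerivWithinAt (fun x => f2 (x, y'))
        (deriv τ (f1 z) * Dx f1 z) sx x' := by
      refine (hτκh.hasDerivWithinAt).congr_of_eventuallyEq hγhE hτz
    rw [← h1.derivWithin hsxU, ← h2.derivWithin hsxU]
  -- contradiction
  apply hdetz
  have hy2 : Dy f2 z = deriv τ (f1 z) * Dy f1 z := by
    rw [hheq] at hveq; linarith [hveq]
  rw [hheq, hy2]; ring

end BWR3

namespace BWRCore
open BWR BWR2 BWR3

def Q2' : Set (ℝ × ℝ) := Set.Icc (0:ℝ) 1 ×ˢ Set.Icc (0:ℝ) 1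

theorem core (l r b t : ℝ → ℝ) (f1 f2 : ℝ × ℝ → ℝ)
    (hl : ContDiff ℝ 1 l) (hr : ContDiff ℝ 1 r) (hb : ContDiff ℝ 1 b) (ht : ContDiff ℝ 1 t)
    (hlr : ∀ y ∈ Set.Icc (0:ℝ) 1, l y < r y) (hbt : ∀ x ∈ Set.Icc (0:ℝ) 1, b x < t x)
    (hEQ : {p : ℝ × ℝ | p.2 ∈ Set.Icc (0:ℝ) 1 ∧ l p.2 ≤ p.1 ∧ p.1 ≤ r p.2} ⊆ Q2')
    (hSQ : {p : ℝ × ℝ | p.1 ∈ Set.Icc (0:ℝ) 1 ∧ b p.1 ≤ p.2 ∧ p.2 ≤ t p.1} ⊆ Q2')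
    (hf : ContDiff ℝ 2 (fun w => ((f1 w, f2 w) : ℝ × ℝ)))
    (hfinj : Set.InjOn (fun w => ((f1 w, f2 w) : ℝ × ℝ))
      {p : ℝ × ℝ | p.2 ∈ Set.Icc (0:ℝ) 1 ∧ l p.2 ≤ p.1 ∧ p.1 ≤ r p.2})
    (hfim : (fun w => ((f1 w, f2 w) : ℝ × ℝ)) ''
        {p : ℝ × ℝ | p.2 ∈ Set.Icc (0:ℝ) 1 ∧ l p.2 ≤ p.1 ∧ p.1 ≤ r p.2}
      = {p : ℝ × ℝ | p.1 ∈ Set.Icc (0:ℝ) 1 ∧ b p.1 ≤ p.2 ∧ p.2 ≤ t p.1})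
    (hdet : ∀ z ∈ {p : ℝ × ℝ | p.2 ∈ Set.Icc (0:ℝ) 1 ∧ l p.2 ≤ p.1 ∧ p.1 ≤ r p.2},
      Dx f1 z * Dy f2 z - Dy f1 z * Dx f2 z ≠ 0)
    (hP : ∀ z ∈ {p : ℝ × ℝ | p.2 ∈ Set.Icc (0:ℝ) 1 ∧ l p.2 ≤ p.1 ∧ p.1 ≤ r p.2},
      0 < Dx f1 z) :
    ∀ y ∈ Set.Icc (0:ℝ) 1, f1 (r y, y) = 1 ∧ f1 (l y, y) = 0 := by
  set E : Set (ℝ × ℝ) := {p : ℝ × ℝ | p.2 ∈ Set.Icc (0:ℝ) 1 ∧ l p.2 ≤ p.1 ∧ p.1 ≤ r p.2}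
    with hEdef
  set S : Set (ℝ × ℝ) := {p : ℝ × ℝ | p.1 ∈ Set.Icc (0:ℝ) 1 ∧ b p.1 ≤ p.2 ∧ p.2 ≤ t p.1}
    with hSdef
  set F : ℝ × ℝ → ℝ × ℝ := fun w => (f1 w, f2 w) with hFdef
  have hFc : Continuous F := (hf.continuous)
  have hf1d : Differentiable ℝ f1 := by
    intro z
    have := ((hf.differentiable (by norm_num)) z).fst
    simpa using this
  have hf2d : Differentiable ℝ f2 := by
    intro z
    have := ((hf.differentiable (by norm_num)) z).snd
    simpa using this
  have hEclosed : IsClosed E := by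
    have h1 : IsClosed {p : ℝ × ℝ | p.2 ∈ Set.Icc (0:ℝ) 1} :=
      isClosed_Icc.preimage continuous_snd
    have h2 : IsClosed {p : ℝ × ℝ | l p.2 ≤ p.1} :=
      isClosed_le (hl.continuous.comp continuous_snd) continuous_fst
    have h3 : IsClosed {p : ℝ × ℝ | p.1 ≤ r p.2} :=
      isClosed_le continuous_fst (hr.continuous.comp continuous_snd)
    have : E = {p : ℝ × ℝ | p.2 ∈ Set.Icc (0:ℝ) 1} ∩
        ({p : ℝ × ℝ | l p.2 ≤ p.1} ∩ {p : ℝ × ℝ | p.1 ≤ r p.2}) := by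
      ext p; simp [hEdef, Set.mem_setOf_eq, and_assoc]
    rw [this]
    exact h1.inter (h2.inter h3)
  have hEcomp : IsCompact E :=
    IsCompact.of_isClosed_subset (isCompact_Icc.prod isCompact_Icc) hEclosed hEQ
  -- boundary facts
  have hbd_r : ∀ y : ℝ, ((r y, y) : ℝ × ℝ) ∉ interior E := by
    intro y h
    rw [mem_interior_iff_mem_nhds, Metric.mem_nhds_iff] at h
    obtain ⟨ε, hε, hball⟩ := h
    have hmem := ball_pt1 (r y) y (ε / 2) ε (by rw [abs_of_nonneg (by linarith)]; linarith)
    have := (hball hmem).2.2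
    simp only at this
    linarith
  have hbd_l : ∀ y : ℝ, ((l y, y) : ℝ × ℝ) ∉ interior E := by
    intro y h
    rw [mem_interior_iff_mem_nhds, Metric.mem_nhds_iff] at h
    obtain ⟨ε, hε, hball⟩ := h
    have hmem := ball_pt1 (l y) y (-(ε / 2)) ε
      (by rw [abs_neg, abs_of_nonneg (by linarith)]; linarith)
    have := (hball hmem).2.1
    simp only at this
    linarith
  have hbd_y : ∀ (x y : ℝ), y = 0 ∨ y = 1 → ((x, y) : ℝ × ℝ) ∉ interior E := by
    intro x y hy h
    rw [mem_interior_iff_mem_nhds, Metric.mem_nhds_iff] at h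
    obtain ⟨ε, hε, hball⟩ := h
    rcases hy with hy | hy
    · subst hy
      have hmem := ball_pt2 x (0:ℝ) (-(ε / 2)) ε
        (by rw [abs_neg, abs_of_nonneg (by linarith)]; linarith)
      have := (hball hmem).1.1
      simp only at this
      linarith
    · subst hy
      have hmem := ball_pt2 x (1:ℝ) (ε / 2) ε (by rw [abs_of_nonneg (by linarith)]; linarith)
      have := (hball hmem).1.2
      simp only at this
      linarith
  -- not interior image
  have hnotint : ∀ z ∈ E, z ∉ interior E → F z ∉ interior S := by
    intro z hz hbz hFz
    obtain ⟨U, hUo, hzU, hUinj⟩ := exists_inj_nbhd f1 f2 z (hf.contDiffAt) (hdet z hz)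
    exact hbz (mem_interior_of_image hEcomp hFc hfinj hz hUo hzU hUinj
      (by rw [show F '' E = S from hfim]; exact hFz))
  -- interior of S contains the open region
  have hOsub : {p : ℝ × ℝ | 0 < p.1 ∧ p.1 < 1 ∧ b p.1 < p.2 ∧ p.2 < t p.1} ⊆ interior S := by
    apply interior_maximal
    · intro p hp
      simp only [Set.mem_setOf_eq] at hp ⊢
      exact ⟨⟨hp.1.le, hp.2.1.le⟩, hp.2.2.1.le, hp.2.2.2.le⟩
    · have h1 : IsOpen {p : ℝ × ℝ | 0 < p.1} := isOpen_lt continuous_const continuous_fst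
      have h2 : IsOpen {p : ℝ × ℝ | p.1 < 1} := isOpen_lt continuous_fst continuous_const
      have h3 : IsOpen {p : ℝ × ℝ | b p.1 < p.2} :=
        isOpen_lt (hb.continuous.comp continuous_fst) continuous_snd
      have h4 : IsOpen {p : ℝ × ℝ | p.2 < t p.1} :=
        isOpen_lt continuous_snd (ht.continuous.comp continuous_fst)
      have : {p : ℝ × ℝ | 0 < p.1 ∧ p.1 < 1 ∧ b p.1 < p.2 ∧ p.2 < t p.1}
          = {p : ℝ × ℝ | 0 < p.1} ∩ ({p : ℝ × ℝ | p.1 < 1} ∩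
            ({p : ℝ × ℝ | b p.1 < p.2} ∩ {p : ℝ × ℝ | p.2 < t p.1})) := by
        ext p; simp [Set.mem_setOf_eq, and_assoc]
      rw [this]
      exact h1.inter (h2.inter (h3.inter h4))
  have hSmem : ∀ z ∈ E, f1 z ∈ Set.Icc (0:ℝ) 1 ∧ b (f1 z) ≤ f2 z ∧ f2 z ≤ t (f1 z) := by
    intro z hz
    have : F z ∈ S := by rw [← hfim]; exact Set.mem_image_of_mem _ hz
    simpa [hSdef, hFdef] using this
  have hbranch : ∀ z ∈ E, z ∉ interior E → f1 z ∈ Set.Ioo (0:ℝ) 1 →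
      f2 z = t (f1 z) ∨ f2 z = b (f1 z) := by
    intro z hz hbz hIoo
    obtain ⟨h1, h2, h3⟩ := hSmem z hz
    by_contra hcon
    push_neg at hcon
    apply hnotint z hz hbz
    apply hOsub
    simp only [Set.mem_setOf_eq]
    exact ⟨hIoo.1, hIoo.2, lt_of_le_of_ne h2 (Ne.symm (by simpa [hFdef] using hcon.2)),
      lt_of_le_of_ne h3 (by simpa [hFdef] using hcon.1)⟩
  -- strict monotonicity in x
  have hmono : ∀ y ∈ Set.Icc (0:ℝ) 1, StrictMonoOn (fun x => f1 (x, y))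
      (Set.Icc (l y) (r y)) := by
    intro y hy
    apply strictMonoOn_of_deriv_pos (convex_Icc _ _)
    · exact (hf1d.continuous.comp (continuous_id.prodMk continuous_const)).continuousOn
    · intro x hx
      rw [interior_Icc] at hx
      have hxE : ((x, y) : ℝ × ℝ) ∈ E := ⟨hy, hx.1.le, hx.2.le⟩
      rw [(hasDerivAt_horiz (hf1d ((x, y) : ℝ × ℝ))).deriv]
      exact hP _ hxE
  have hlt : ∀ y ∈ Set.Icc (0:ℝ) 1, f1 (l y, y) < f1 (r y, y) := by
    intro y hy
    exact hmono y hy (Set.left_mem_Icc.mpr (hlr y hy).le)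
      (Set.right_mem_Icc.mpr (hlr y hy).le) (hlr y hy)
  -- gap
  obtain ⟨δ, hδ, hgap⟩ : ∃ δ : ℝ, 0 < δ ∧ ∀ x ∈ Set.Icc (0:ℝ) 1, δ ≤ t x - b x := by
    obtain ⟨x₀, hx₀, hmin⟩ := isCompact_Icc.exists_isMinOn (Set.nonempty_Icc.mpr zero_le_one)
      ((ht.continuous.sub hb.continuous).continuousOn)
    exact ⟨t x₀ - b x₀, by linarith [hbt x₀ hx₀], fun x hx => hmin hx⟩
  -- the main boundary argument
  have bdry : ∀ (c : ℝ → ℝ), ContDiff ℝ 1 c →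
      (∀ y ∈ Set.Icc (0:ℝ) 1, ((c y, y) : ℝ × ℝ) ∈ E) →
      (∀ y : ℝ, ((c y, y) : ℝ × ℝ) ∉ interior E) →
      ∀ (X : ℝ), (∀ y ∈ Set.Icc (0:ℝ) 1, f1 (c y, y) ≠ X → f1 (c y, y) ∈ Set.Ioo (0:ℝ) 1) →
      ∀ (sx : ℝ → Set ℝ), (∀ y, UniqueDiffWithinAt ℝ (sx y) (c y)) → (∀ y, c y ∈ sx y) →
      (∀ y : ℝ, y = 0 ∨ y = 1 →
        (∀ᶠ x in 𝓝[sx y] (c y), ((x, y) : ℝ × ℝ) ∈ E ∧ ((x, y) : ℝ × ℝ) ∉ interior E)) →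
      ∀ y ∈ Set.Icc (0:ℝ) 1, f1 (c y, y) = X := by
    intro c hcC hcE hcBd X hIooX sx hsxU hsxm hsxev
    have hcd : Differentiable ℝ c := hcC.differentiable one_ne_zero
    have hγc : Continuous fun y => ((c y, y) : ℝ × ℝ) :=
      hcC.continuous.prodMk continuous_id
    have hκc : Continuous fun y => f1 (c y, y) := hf1d.continuous.comp hγc
    have hμc : Continuous fun y => f2 (c y, y) := hf2d.continuous.comp hγc
    -- corners
    have hcorner : ∀ y', y' = 0 ∨ y' = 1 → f1 (c y', y') = X := by
      intro y' hy'
      by_contra hne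
      have hy'I : y' ∈ Set.Icc (0:ℝ) 1 := by rcases hy' with h | h <;> subst h <;> simp
      have hκ := hIooX y' hy'I hne
      have hzE := hcE y' hy'I
      rcases hy' with h | h <;> subst h
      · have hyev : ∀ᶠ y in 𝓝[Set.Ici (0:ℝ)] (0:ℝ),
            ((c y, y) : ℝ × ℝ) ∈ E ∧ ((c y, y) : ℝ × ℝ) ∉ interior E := by
          have h1 : ∀ᶠ y in 𝓝[Set.Ici (0:ℝ)] (0:ℝ), y < 1 := by
            filter_upwards [nhdsWithin_le_nhds (Iio_mem_nhds (by norm_num : (0:ℝ) < 1))]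
              with y hy using hy
          filter_upwards [h1, self_mem_nhdsWithin] with y h1y h2y
          exact ⟨hcE y ⟨h2y, h1y.le⟩, hcBd y⟩
        exact corner_aux b t f1 f2 E ht.continuous hb.continuous (ht.differentiable one_ne_zero)
          (hb.differentiable one_ne_zero) hf1d hf2d δ hδ hgap hbranch (c 0) 0 hzE
          (hdet _ hzE) c rfl (hcd 0) (Set.Ici 0) (uniqueDiffOn_Ici 0 0 Set.self_mem_Ici)
          Set.self_mem_Ici hyev (sx 0) (hsxU 0) (hsxm 0) (hsxev 0 (Or.inl rfl)) hκ
      · have hyev : ∀ᶠ y in 𝓝[Set.Iic (1:ℝ)] (1:ℝ),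
            ((c y, y) : ℝ × ℝ) ∈ E ∧ ((c y, y) : ℝ × ℝ) ∉ interior E := by
          have h1 : ∀ᶠ y in 𝓝[Set.Iic (1:ℝ)] (1:ℝ), 0 < y := by
            filter_upwards [nhdsWithin_le_nhds (Ioi_mem_nhds (by norm_num : (0:ℝ) < 1))]
              with y hy using hy
          filter_upwards [h1, self_mem_nhdsWithin] with y h1y h2y
          exact ⟨hcE y ⟨h1y.le, h2y⟩, hcBd y⟩
        exact corner_aux b t f1 f2 E ht.continuous hb.continuous (ht.differentiable one_ne_zero)
          (hb.differentiable one_ne_zero) hf1d hf2d δ hδ hgap hbranch (c 1) 1 hzE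
          (hdet _ hzE) c rfl (hcd 1) (Set.Iic 1) (uniqueDiffOn_Iic 1 1 Set.self_mem_Iic)
          Set.self_mem_Iic hyev (sx 1) (hsxU 1) (hsxm 1) (hsxev 1 (Or.inr rfl)) hκ
    -- gap argument
    intro y₀ hy₀
    by_contra hne
    have hA0 : f1 (c 0, 0) = X := hcorner 0 (Or.inl rfl)
    have hA1 : f1 (c 1, 1) = X := hcorner 1 (Or.inr rfl)
    set Au : Set ℝ := Set.Icc (0:ℝ) y₀ ∩ {y | f1 (c y, y) = X} with hAudef
    have hAuclosed : IsClosed Au := isClosed_Icc.inter (isClosed_eq hκc continuous_const)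
    have hAucomp : IsCompact Au := IsCompact.of_isClosed_subset isCompact_Icc hAuclosed
      (Set.inter_subset_left.trans (Set.Icc_subset_Icc le_rfl hy₀.2))
    have hAune : Au.Nonempty := ⟨0, Set.left_mem_Icc.mpr hy₀.1, hA0⟩
    set u := sSup Au with hudef
    have hu : u ∈ Au := hAucomp.sSup_mem hAune
    have hulty : u < y₀ := lt_of_le_of_ne hu.1.2 (fun h => hne (by rw [← h]; exact hu.2))
    set Av : Set ℝ := Set.Icc y₀ 1 ∩ {y | f1 (c y, y) = X} with hAvdef
    have hAvclosed : IsClosed Av := isClosed_Icc.inter (isClosed_eq hκc continuous_const)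
    have hAvcomp : IsCompact Av := IsCompact.of_isClosed_subset isCompact_Icc hAvclosed
      (Set.inter_subset_left.trans (Set.Icc_subset_Icc hy₀.1 le_rfl))
    have hAvne : Av.Nonempty := ⟨1, Set.right_mem_Icc.mpr hy₀.2, hA1⟩
    set v := sInf Av with hvdef
    have hv : v ∈ Av := hAvcomp.sInf_mem hAvne
    have hvgty : y₀ < v := lt_of_le_of_ne hv.1.1 (fun h => hne (by rw [h]; exact hv.2))
    have huv : u < v := hulty.trans hvgty
    have humem : u ∈ Set.Icc (0:ℝ) 1 := ⟨hu.1.1, hu.1.2.trans hy₀.2⟩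
    have hvmem : v ∈ Set.Icc (0:ℝ) 1 := ⟨hy₀.1.trans hv.1.1, hv.1.2⟩
    have hmid : ∀ y ∈ Set.Ioo u v, f1 (c y, y) ≠ X ∧ y ∈ Set.Icc (0:ℝ) 1 := by
      intro y hy
      have hyI : y ∈ Set.Icc (0:ℝ) 1 := ⟨hu.1.1.trans hy.1.le, hy.2.le.trans hvmem.2⟩
      refine ⟨?_, hyI⟩
      intro hX
      rcases le_or_gt y y₀ with h | h
      · have hyAu : y ∈ Au := ⟨⟨hyI.1, h⟩, hX⟩
        exact absurd (le_csSup hAucomp.bddAbove hyAu) (not_le.mpr hy.1)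
      · have hyAv : y ∈ Av := ⟨⟨h.le, hyI.2⟩, hX⟩
        exact absurd (csInf_le hAvcomp.bddBelow hyAv) (not_le.mpr hy.2)
    set Ct : Set ℝ := {y : ℝ | y ∈ Set.Icc (0:ℝ) 1 ∧ f2 (c y, y) = t (f1 (c y, y))}
      with hCtdef
    set Cb : Set ℝ := {y : ℝ | y ∈ Set.Icc (0:ℝ) 1 ∧ f2 (c y, y) = b (f1 (c y, y))}
      with hCbdef
    have hCtc : IsClosed Ct := by
      have : Ct = Set.Icc (0:ℝ) 1 ∩ {y | f2 (c y, y) = t (f1 (c y, y))} := by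
        ext y; simp [hCtdef, Set.mem_setOf_eq]
      rw [this]
      exact isClosed_Icc.inter (isClosed_eq hμc (ht.continuous.comp hκc))
    have hCbc : IsClosed Cb := by
      have : Cb = Set.Icc (0:ℝ) 1 ∩ {y | f2 (c y, y) = b (f1 (c y, y))} := by
        ext y; simp [hCbdef, Set.mem_setOf_eq]
      rw [this]
      exact isClosed_Icc.inter (isClosed_eq hμc (hb.continuous.comp hκc))
    have hsubtv : Set.Ioo u v ⊆ Ct ∪ Cb := by
      intro y hy
      obtain ⟨hXne, hyI⟩ := hmid y hy
      have hκI := hIooX y hyI hXne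
      rcases hbranch (c y, y) (hcE y hyI) (hcBd y) hκI with h | h
      · exact Or.inl ⟨hyI, h⟩
      · exact Or.inr ⟨hyI, h⟩
    have hdisjtv : Set.Ioo u v ∩ (Ct ∩ Cb) = ∅ := by
      rw [Set.eq_empty_iff_forall_notMem]
      rintro y ⟨hy, hyt, hyb⟩
      obtain ⟨hXne, hyI⟩ := hmid y hy
      have hκI : f1 (c y, y) ∈ Set.Icc (0:ℝ) 1 :=
        Set.Ioo_subset_Icc_self (hIooX y hyI hXne)
      have hg := hgap _ hκI
      simp only [hCtdef, Set.mem_setOf_eq] at hyt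
      simp only [hCbdef, Set.mem_setOf_eq] at hyb
      have h2 := hyb.2
      rw [hyt.2] at h2
      linarith
    have hconc : ∀ τ : ℝ → ℝ, Continuous τ →
        Set.Ioo u v ⊆ {y : ℝ | y ∈ Set.Icc (0:ℝ) 1 ∧ f2 (c y, y) = τ (f1 (c y, y))} →
        False := by
      intro τ hτc hsubτ
      have hcl : IsClosed {y : ℝ | y ∈ Set.Icc (0:ℝ) 1 ∧ f2 (c y, y) = τ (f1 (c y, y))} := by
        have : {y : ℝ | y ∈ Set.Icc (0:ℝ) 1 ∧ f2 (c y, y) = τ (f1 (c y, y))}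
            = Set.Icc (0:ℝ) 1 ∩ {y | f2 (c y, y) = τ (f1 (c y, y))} := by
          ext y; simp [Set.mem_setOf_eq]
        rw [this]
        exact isClosed_Icc.inter (isClosed_eq hμc (hτc.comp hκc))
      have hclosure : closure (Set.Ioo u v)
          ⊆ {y : ℝ | y ∈ Set.Icc (0:ℝ) 1 ∧ f2 (c y, y) = τ (f1 (c y, y))} :=
        hcl.closure_subset_iff.mpr hsubτ
      have hu' : u ∈ closure (Set.Ioo u v) := by
        rw [closure_Ioo huv.ne]; exact Set.left_mem_Icc.mpr huv.le
      have hv' : v ∈ closure (Set.Ioo u v) := by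
        rw [closure_Ioo huv.ne]; exact Set.right_mem_Icc.mpr huv.le
      have hueq := (hclosure hu').2
      have hveq := (hclosure hv').2
      have hFu : F ((c u, u) : ℝ × ℝ) = F ((c v, v) : ℝ × ℝ) := by
        show ((f1 (c u, u), f2 (c u, u)) : ℝ × ℝ) = (f1 (c v, v), f2 (c v, v))
        have h1 : f1 (c u, u) = X := hu.2
        have h2 : f1 (c v, v) = X := hv.2
        rw [hueq, hveq, h1, h2]
      have hpair := hfinj (hcE u humem) (hcE v hvmem) hFu
      have : u = v := congrArg Prod.snd hpair
      exact absurd this huv.ne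
    rcases (isPreconnected_iff_subset_of_disjoint_closed.mp isPreconnected_Ioo) Ct Cb
      hCtc hCbc hsubtv hdisjtv with h | h
    · exact hconc t ht.continuous h
    · exact hconc b hb.continuous h
  -- apply to r and to l
  have hrange1 : ∀ z ∈ E, f1 z ∈ Set.Icc (0:ℝ) 1 := fun z hz => (hSmem z hz).1
  have hright : ∀ y ∈ Set.Icc (0:ℝ) 1, f1 (r y, y) = 1 := by
    apply bdry r hr
    · intro y hy; exact ⟨hy, (hlr y hy).le, le_rfl⟩
    · exact hbd_r
    · intro y hy hne
      have hyE : ((r y, y) : ℝ × ℝ) ∈ E := ⟨hy, (hlr y hy).le, le_rfl⟩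
      have hyEl : ((l y, y) : ℝ × ℝ) ∈ E := ⟨hy, le_rfl, (hlr y hy).le⟩
      constructor
      · exact lt_of_le_of_lt (hrange1 _ hyEl).1 (hlt y hy)
      · exact lt_of_le_of_ne (hrange1 _ hyE).2 hne
    · exact fun y => uniqueDiffOn_Iic (r y) (r y) Set.self_mem_Iic
    · exact fun y => Set.self_mem_Iic
    · intro y hy01
      have hyI : y ∈ Set.Icc (0:ℝ) 1 := by rcases hy01 with h | h <;> subst h <;> simp
      have h1 : ∀ᶠ x in 𝓝[Set.Iic (r y)] (r y), l y < x := by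
        filter_upwards [nhdsWithin_le_nhds (Ioi_mem_nhds (hlr y hyI))] with x hx using hx
      filter_upwards [h1, self_mem_nhdsWithin] with x h1x h2x
      exact ⟨⟨hyI, h1x.le, h2x⟩, hbd_y x y hy01⟩
  have hleft : ∀ y ∈ Set.Icc (0:ℝ) 1, f1 (l y, y) = 0 := by
    apply bdry l hl
    · intro y hy; exact ⟨hy, le_rfl, (hlr y hy).le⟩
    · exact hbd_l
    · intro y hy hne
      have hyE : ((r y, y) : ℝ × ℝ) ∈ E := ⟨hy, (hlr y hy).le, le_rfl⟩
      have hyEl : ((l y, y) : ℝ × ℝ) ∈ E := ⟨hy, le_rfl, (hlr y hy).le⟩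
      constructor
      · exact lt_of_le_of_ne (hrange1 _ hyEl).1 (Ne.symm hne)
      · exact lt_of_lt_of_le (hlt y hy) (hrange1 _ hyE).2
    · exact fun y => uniqueDiffOn_Ici (l y) (l y) Set.self_mem_Ici
    · exact fun y => Set.self_mem_Ici
    · intro y hy01
      have hyI : y ∈ Set.Icc (0:ℝ) 1 := by rcases hy01 with h | h <;> subst h <;> simp
      have h1 : ∀ᶠ x in 𝓝[Set.Ici (l y)] (l y), x < r y := by
        filter_upwards [nhdsWithin_le_nhds (Iio_mem_nhds (hlr y hyI))] with x hx using hx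
      filter_upwards [h1, self_mem_nhdsWithin] with x h1x h2x
      exact ⟨⟨hyI, h2x, h1x.le⟩, hbd_y x y hy01⟩
  exact fun y hy => ⟨hright y hy, hleft y hy⟩

end BWRCore

namespace BWRDist
open BWR BWR2 BWRCore

/-- One-dimensional log-derivative bound along a segment. -/
lemma log_bound_seg {g g' : ℝ → ℝ} {s : Set ℝ} (hs : Convex ℝ s) {C : ℝ}
    (hg : ∀ x ∈ s, HasDerivAt g (g' x) x) (hne : ∀ x ∈ s, g x ≠ 0)
    (hbd : ∀ x ∈ s, |g' x| ≤ C * |g x|) {x y : ℝ} (hx : x ∈ s) (hy : y ∈ s)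
    (hdist : |y - x| ≤ 1) (hC : 0 ≤ C) :
    Real.log |g y| - Real.log |g x| ≤ C := by
  have h1 : ∀ w ∈ s, HasDerivWithinAt (fun w => Real.log (g w)) ((g w)⁻¹ * g' w) s w := by
    intro w hw
    exact ((Real.hasDerivAt_log (hne w hw)).comp w (hg w hw)).hasDerivWithinAt
  have h2 : ∀ w ∈ s, ‖(g w)⁻¹ * g' w‖ ≤ C := by
    intro w hw
    rw [Real.norm_eq_abs, abs_mul, abs_inv]
    have hgw : 0 < |g w| := abs_pos.mpr (hne w hw)
    rw [inv_mul_le_iff₀ hgw]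
    calc |g' w| ≤ C * |g w| := hbd w hw
      _ = |g w| * C := mul_comm _ _
  have := hs.norm_image_sub_le_of_norm_hasDerivWithin_le h1 h2 hx hy
  rw [Real.norm_eq_abs, Real.norm_eq_abs] at this
  have hle : Real.log (g y) - Real.log (g x) ≤ C * |y - x| :=
    le_trans (le_abs_self _) this
  have hC1 : C * |y - x| ≤ C := by
    calc C * |y - x| ≤ C * 1 := by
          exact mul_le_mul_of_nonneg_left hdist hC
      _ = C := mul_one C
  rw [Real.log_abs, Real.log_abs]
  linarith

theorem distortion (l r : ℝ → ℝ) (P : ℝ × ℝ → ℝ) (C₀ : ℝ) (hC₀ : 0 ≤ C₀)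
    (hld : Differentiable ℝ l) (hl1 : ∀ y, |deriv l y| ≤ 1)
    (hlr : ∀ y ∈ Set.Icc (0:ℝ) 1, l y ≤ r y)
    (hEQ : {p : ℝ × ℝ | p.2 ∈ Set.Icc (0:ℝ) 1 ∧ l p.2 ≤ p.1 ∧ p.1 ≤ r p.2} ⊆ Q2')
    (hPd : Differentiable ℝ P)
    (hPne : ∀ z ∈ {p : ℝ × ℝ | p.2 ∈ Set.Icc (0:ℝ) 1 ∧ l p.2 ≤ p.1 ∧ p.1 ≤ r p.2}, P z ≠ 0)
    (hDx : ∀ z ∈ {p : ℝ × ℝ | p.2 ∈ Set.Icc (0:ℝ) 1 ∧ l p.2 ≤ p.1 ∧ p.1 ≤ r p.2},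
      |Dx P z| ≤ C₀ * |P z|)
    (hDy : ∀ z ∈ {p : ℝ × ℝ | p.2 ∈ Set.Icc (0:ℝ) 1 ∧ l p.2 ≤ p.1 ∧ p.1 ≤ r p.2},
      |Dy P z| ≤ C₀ * |P z|) :
    ∀ z₁ ∈ {p : ℝ × ℝ | p.2 ∈ Set.Icc (0:ℝ) 1 ∧ l p.2 ≤ p.1 ∧ p.1 ≤ r p.2},
    ∀ z₂ ∈ {p : ℝ × ℝ | p.2 ∈ Set.Icc (0:ℝ) 1 ∧ l p.2 ≤ p.1 ∧ p.1 ≤ r p.2},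
      |P z₂| ≤ Real.exp (4 * C₀) * |P z₁| := by
  set E : Set (ℝ × ℝ) := {p : ℝ × ℝ | p.2 ∈ Set.Icc (0:ℝ) 1 ∧ l p.2 ≤ p.1 ∧ p.1 ≤ r p.2}
    with hEdef
  have hcoord : ∀ z ∈ E, z.1 ∈ Set.Icc (0:ℝ) 1 ∧ z.2 ∈ Set.Icc (0:ℝ) 1 := by
    intro z hz
    exact Set.mem_prod.mp
      (show z ∈ Set.Icc (0:ℝ) 1 ×ˢ Set.Icc (0:ℝ) 1 from hEQ hz)
  -- horizontal bound within one fiber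
  have hhoriz : ∀ y ∈ Set.Icc (0:ℝ) 1, ∀ x₁ x₂ : ℝ,
      ((x₁, y) : ℝ × ℝ) ∈ E → ((x₂, y) : ℝ × ℝ) ∈ E →
      Real.log |P (x₂, y)| - Real.log |P (x₁, y)| ≤ C₀ := by
    intro y hy x₁ x₂ h1 h2
    have hsub : Set.uIcc x₁ x₂ ⊆ Set.Icc (l y) (r y) :=
      Set.uIcc_subset_Icc ⟨h1.2.1, h1.2.2⟩ ⟨h2.2.1, h2.2.2⟩
    have hgderiv : ∀ x ∈ Set.uIcc x₁ x₂, HasDerivAt (fun x => P (x, y)) (Dx P (x, y)) x :=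
      fun x _ => hasDerivAt_horiz (hPd (x, y))
    have hgne : ∀ x ∈ Set.uIcc x₁ x₂, P (x, y) ≠ 0 := by
      intro x hx
      exact hPne (x, y) ⟨hy, (hsub hx).1, (hsub hx).2⟩
    have hgbd : ∀ x ∈ Set.uIcc x₁ x₂, |Dx P (x, y)| ≤ C₀ * |P (x, y)| := by
      intro x hx
      exact hDx (x, y) ⟨hy, (hsub hx).1, (hsub hx).2⟩
    have hd : |x₂ - x₁| ≤ 1 := by
      have c1 := (hcoord _ h1).1
      have c2 := (hcoord _ h2).1
      rw [abs_sub_le_iff]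
      exact ⟨by linarith [c1.1, c1.2, c2.1, c2.2], by linarith [c1.1, c1.2, c2.1, c2.2]⟩
    exact log_bound_seg (convex_uIcc x₁ x₂) hgderiv hgne hgbd Set.left_mem_uIcc
      Set.right_mem_uIcc hd hC₀
  -- vertical bound along the left boundary curve
  have hvert : ∀ y₁ ∈ Set.Icc (0:ℝ) 1, ∀ y₂ ∈ Set.Icc (0:ℝ) 1,
      Real.log |P (l y₂, y₂)| - Real.log |P (l y₁, y₁)| ≤ 2 * C₀ := by
    intro y₁ hy₁ y₂ hy₂
    have hsub : Set.uIcc y₁ y₂ ⊆ Set.Icc (0:ℝ) 1 := Set.uIcc_subset_Icc hy₁ hy₂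
    have hmem : ∀ y ∈ Set.uIcc y₁ y₂, ((l y, y) : ℝ × ℝ) ∈ E :=
      fun y hy => ⟨hsub hy, le_rfl, hlr y (hsub hy)⟩
    have hgderiv : ∀ y ∈ Set.uIcc y₁ y₂, HasDerivAt (fun y => P (l y, y))
        (deriv l y * Dx P (l y, y) + Dy P (l y, y)) y :=
      fun y _ => hasDerivAt_along (hPd (l y, y)) (hld y).hasDerivAt
    have hgne : ∀ y ∈ Set.uIcc y₁ y₂, P (l y, y) ≠ 0 :=
      fun y hy => hPne _ (hmem y hy)
    have hgbd : ∀ y ∈ Set.uIcc y₁ y₂,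
        |deriv l y * Dx P (l y, y) + Dy P (l y, y)| ≤ (2 * C₀) * |P (l y, y)| := by
      intro y hy
      have hx := hDx _ (hmem y hy)
      have hy' := hDy _ (hmem y hy)
      have hl' := hl1 y
      calc |deriv l y * Dx P (l y, y) + Dy P (l y, y)|
          ≤ |deriv l y * Dx P (l y, y)| + |Dy P (l y, y)| := abs_add_le _ _
        _ = |deriv l y| * |Dx P (l y, y)| + |Dy P (l y, y)| := by rw [abs_mul]
        _ ≤ 1 * (C₀ * |P (l y, y)|) + C₀ * |P (l y, y)| := by
            apply add_le_add _ hy'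
            apply mul_le_mul hl' hx (abs_nonneg _) zero_le_one
        _ = (2 * C₀) * |P (l y, y)| := by ring
    have hd : |y₂ - y₁| ≤ 1 := by
      rw [abs_sub_le_iff]
      constructor <;> nlinarith [hy₁.1, hy₁.2, hy₂.1, hy₂.2]
    exact log_bound_seg (convex_uIcc y₁ y₂) hgderiv hgne hgbd Set.left_mem_uIcc
      Set.right_mem_uIcc hd (by linarith)
  -- combine
  intro z₁ hz₁ z₂ hz₂
  have hy₁ : z₁.2 ∈ Set.Icc (0:ℝ) 1 := hz₁.1
  have hy₂ : z₂.2 ∈ Set.Icc (0:ℝ) 1 := hz₂.1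
  have hl₁ : ((l z₁.2, z₁.2) : ℝ × ℝ) ∈ E := ⟨hy₁, le_rfl, hlr _ hy₁⟩
  have hl₂ : ((l z₂.2, z₂.2) : ℝ × ℝ) ∈ E := ⟨hy₂, le_rfl, hlr _ hy₂⟩
  have hz₁' : ((z₁.1, z₁.2) : ℝ × ℝ) ∈ E := by rw [Prod.mk.eta]; exact hz₁
  have hz₂' : ((z₂.1, z₂.2) : ℝ × ℝ) ∈ E := by rw [Prod.mk.eta]; exact hz₂
  have h1 := hhoriz z₁.2 hy₁ z₁.1 (l z₁.2) hz₁' hl₁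
  have h2 := hvert z₁.2 hy₁ z₂.2 hy₂
  have h3 := hhoriz z₂.2 hy₂ (l z₂.2) z₂.1 hl₂ hz₂'
  rw [Prod.mk.eta] at h1 h3
  have hsum : Real.log |P z₂| - Real.log |P z₁| ≤ 4 * C₀ := by linarith
  have hp₁ : 0 < |P z₁| := abs_pos.mpr (hPne _ hz₁)
  have hp₂ : 0 < |P z₂| := abs_pos.mpr (hPne _ hz₂)
  calc |P z₂| = Real.exp (Real.log |P z₂|) := (Real.exp_log hp₂).symm
    _ ≤ Real.exp (4 * C₀ + Real.log |P z₁|) := by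
        apply Real.exp_le_exp.mpr
        linarith
    _ = Real.exp (4 * C₀) * |P z₁| := by
        rw [Real.exp_add, Real.exp_log hp₁]

end BWRDist

namespace BWRMain
open BWR BWR2 BWR3 BWRCore BWRDist

theorem erect_preconnected (l r : ℝ → ℝ) (hl : Continuous l) (hr : Continuous r)
    (hlr : ∀ y ∈ Set.Icc (0:ℝ) 1, l y ≤ r y) :
    IsPreconnected {p : ℝ × ℝ | p.2 ∈ Set.Icc (0:ℝ) 1 ∧ l p.2 ≤ p.1 ∧ p.1 ≤ r p.2} := by
  have himg : {p : ℝ × ℝ | p.2 ∈ Set.Icc (0:ℝ) 1 ∧ l p.2 ≤ p.1 ∧ p.1 ≤ r p.2}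
      = (fun q : ℝ × ℝ => ((l q.2 + q.1 * (r q.2 - l q.2), q.2) : ℝ × ℝ)) ''
        (Set.Icc (0:ℝ) 1 ×ˢ Set.Icc (0:ℝ) 1) := by
    ext p
    constructor
    · rintro ⟨hy, h1, h2⟩
      by_cases hrl : r p.2 - l p.2 = 0
      · refine ⟨((0 : ℝ), p.2), ⟨⟨le_rfl, zero_le_one⟩, hy⟩, ?_⟩
        have : l p.2 = p.1 := by nlinarith
        simp only []
        rw [Prod.mk.injEq]
        constructor
        · rw [zero_mul, add_zero]; exact this
        · rfl
      · have hpos : 0 < r p.2 - l p.2 := lt_of_le_of_ne (by linarith [hlr p.2 hy]) (Ne.symm hrl)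
        refine ⟨(((p.1 - l p.2) / (r p.2 - l p.2)), p.2),
          ⟨⟨div_nonneg (by linarith) hpos.le, by rw [div_le_one hpos]; linarith⟩, hy⟩, ?_⟩
        simp only []
        rw [Prod.mk.injEq]
        constructor
        · simp only [div_mul_cancel₀ _ hrl]; ring
        · rfl
    · rintro ⟨⟨s, y⟩, ⟨hs, hy⟩, rfl⟩
      simp only [Set.mem_setOf_eq]
      refine ⟨hy, ?_, ?_⟩
      · nlinarith [hs.1, hs.2, hlr y hy]
      · nlinarith [hs.1, hs.2, hlr y hy]
  rw [himg]
  exact (((convex_Icc (0:ℝ) 1).prod (convex_Icc (0:ℝ) 1)).isPreconnected).image _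
    (Continuous.continuousOn (by
      exact ((hl.comp continuous_snd).add (continuous_fst.mul
        ((hr.comp continuous_snd).sub (hl.comp continuous_snd)))).prodMk continuous_snd))

lemma Dx_const_sub (g : ℝ × ℝ → ℝ) (z : ℝ × ℝ) (hg : DifferentiableAt ℝ g z) (k : ℝ) :
    Dx (fun w => k - g w) z = -Dx g z := by
  have h := (hasDerivAt_Dx hg).const_sub k
  exact h.deriv

lemma hasDerivAt_Dy {g : ℝ × ℝ → ℝ} {z : ℝ × ℝ} (hg : DifferentiableAt ℝ g z) :
    HasDerivAt (fun s => g (z.1, s)) (Dy g z) z.2 := by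
  rw [Dy_eq hg]; exact hasDerivAt_dy hg

lemma Dy_const_sub (g : ℝ × ℝ → ℝ) (z : ℝ × ℝ) (hg : DifferentiableAt ℝ g z) (k : ℝ) :
    Dy (fun w => k - g w) z = -Dy g z := by
  have h := (hasDerivAt_Dy hg).const_sub k
  exact h.deriv

end BWRMain


/-- Corollary 5.4: under H1–H5 and D2, the widths of the horizontal cross-sections of
each `E_i` have uniformly bounded ratios, with a constant independent of `i`. -/
theorem bounded_width_ratio
    (α K₀ : ℝ) (hα0 : 0 < α) (hα1 : α < 1) (hK : 1 < K₀)
    (l r b t : ℕ → ℝ → ℝ) (f1 f2 : ℕ → ℝ × ℝ → ℝ)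
    (hl : ∀ i, ContDiff ℝ 1 (l i)) (hr : ∀ i, ContDiff ℝ 1 (r i))
    (hb : ∀ i, ContDiff ℝ 1 (b i)) (ht : ∀ i, ContDiff ℝ 1 (t i))
    (hl' : ∀ i y, |deriv (l i) y| ≤ α) (hr' : ∀ i y, |deriv (r i) y| ≤ α)
    (hb' : ∀ i x, |deriv (b i) x| ≤ α) (ht' : ∀ i x, |deriv (t i) x| ≤ α)
    (hlr : ∀ i, ∀ y ∈ Set.Icc (0:ℝ) 1, l i y < r i y)
    (hbt : ∀ i, ∀ x ∈ Set.Icc (0:ℝ) 1, b i x < t i x)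
    (hEQ : ∀ i, Erect l r i ⊆ Q2) (hSQ : ∀ i, Sstrip b t i ⊆ Q2)
    (hfsm : ∀ i, ContDiff ℝ 2 (fv f1 f2 i))
    (hfinj : ∀ i, Set.InjOn (fv f1 f2 i) (Erect l r i))
    (hfim : ∀ i, fv f1 f2 i '' Erect l r i = Sstrip b t i)
    (hJpos : ∀ i, ∀ z ∈ Erect l r i, 0 < Jac f1 f2 i z)
    (hG1E : ∀ i j, i ≠ j → interior (Erect l r i) ∩ interior (Erect l r j) = ∅)
    (hG1S : ∀ i j, i ≠ j → interior (Sstrip b t i) ∩ interior (Sstrip b t j) = ∅)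
    (hG2 : volume (Q2 \ ⋃ i, interior (Erect l r i)) = 0)
    (hG3 : Summable (fun i => deltaMax l r i * Real.log (1 / deltaMin l r i)))
    (hH1 : ∀ i, ∀ z ∈ Erect l r i,
      |Dx (f2 i) z| + α * |Dy (f2 i) z| + α ^ 2 * |Dy (f1 i) z| ≤ α * |Dx (f1 i) z|)
    (hH2 : ∀ i, ∀ z ∈ Erect l r i, K₀ ≤ |Dx (f1 i) z| - α * |Dy (f1 i) z|)
    (hH3 : ∀ i, ∀ z ∈ Erect l r i,
      |Dy (f1 i) z| + α * |Dy (f2 i) z| + α ^ 2 * |Dx (f2 i) z| ≤ α * |Dx (f1 i) z|)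
    (hH4 : ∀ i, ∀ z ∈ Erect l r i, Jac f1 f2 i z * K₀ ≤ |Dx (f1 i) z| - α * |Dx (f2 i) z|)
    (hH5 : 1 / K₀ ^ 2 + α ^ 2 < 1)
    (C₀ : ℝ) (hC₀ : 0 < C₀)
    (hD2 : ∀ i, ∀ z ∈ Erect l r i, D2max f1 f2 i z ≤ C₀ * |Dx (f1 i) z|)
    :
    ∃ c : ℝ, 0 < c ∧ ∀ i : ℕ, ∀ z₁ ∈ Erect l r i, ∀ z₂ ∈ Erect l r i,
      r i z₁.2 - l i z₁.2 ≤ c * (r i z₂.2 - l i z₂.2) := by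

  classical
  refine ⟨Real.exp (4 * C₀), Real.exp_pos _, ?_⟩
  intro i z₁ hz₁ z₂ hz₂
  have hf1C : ContDiff ℝ 2 (f1 i) := contDiff_fst.comp (hfsm i)
  have hf2C : ContDiff ℝ 2 (f2 i) := contDiff_snd.comp (hfsm i)
  have hf1d : Differentiable ℝ (f1 i) := hf1C.differentiable (by norm_num)
  have hf2d : Differentiable ℝ (f2 i) := hf2C.differentiable (by norm_num)
  have hK0 : (0:ℝ) < K₀ := lt_trans one_pos hK
  have habs : ∀ z ∈ Erect l r i, K₀ ≤ |Dx (f1 i) z| := by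
    intro z hz
    have h := hH2 i z hz
    nlinarith [abs_nonneg (Dy (f1 i) z), hα0.le,
      mul_nonneg hα0.le (abs_nonneg (Dy (f1 i) z))]
  have hPne : ∀ z ∈ Erect l r i, Dx (f1 i) z ≠ 0 := by
    intro z hz h0
    have := habs z hz
    rw [h0, abs_zero] at this
    linarith
  have hdet : ∀ z ∈ Erect l r i,
      Dx (f1 i) z * Dy (f2 i) z - Dy (f1 i) z * Dx (f2 i) z ≠ 0 := by
    intro z hz
    exact abs_pos.mp (hJpos i z hz)
  -- the key width-one property of the image of each fiber
  have key : ∀ y ∈ Set.Icc (0:ℝ) 1, |f1 i (r i y, y) - f1 i (l i y, y)| = 1 := by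
    have hPcont : Continuous (Dx (f1 i)) := by
      have heq : Dx (f1 i) = fun z => fderiv ℝ (f1 i) z ((1 : ℝ), (0 : ℝ)) :=
        funext fun z => BWR.Dx_eq (hf1d z)
      rw [heq]
      exact ((hf1C.fderiv_right (m := 1) (by norm_num : (1 : WithTop ℕ∞) + 1 ≤ 2)).clm_apply
        contDiff_const).continuous
    have hconn := BWRMain.erect_preconnected (l i) (r i) (hl i).continuous
      (hr i).continuous (fun y hy => (hlr i y hy).le)
    by_cases hsgn : ∀ z ∈ Erect l r i, 0 < Dx (f1 i) z
    · -- positive case: apply core directly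
      have hcore := BWRCore.core (l i) (r i) (b i) (t i) (f1 i) (f2 i)
        (hl i) (hr i) (hb i) (ht i) (hlr i) (hbt i) (hEQ i) (hSQ i) (hfsm i)
        (hfinj i) (hfim i) hdet hsgn
      intro y hy
      obtain ⟨h1, h2⟩ := hcore y hy
      rw [h1, h2]
      norm_num
    · -- negative case
      have hneg : ∀ z ∈ Erect l r i, Dx (f1 i) z < 0 := by
        push_neg at hsgn
        obtain ⟨z₀, hz₀, hz₀le⟩ := hsgn
        have hz₀neg : Dx (f1 i) z₀ < 0 := lt_of_le_of_ne hz₀le (hPne z₀ hz₀)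
        intro z hz
        by_contra hcon
        push_neg at hcon
        have hzpos : 0 < Dx (f1 i) z := lt_of_le_of_ne hcon (Ne.symm (hPne z hz))
        have hIV := hconn.intermediate_value hz₀ hz hPcont.continuousOn
        have h0 : (0:ℝ) ∈ Set.Icc (Dx (f1 i) z₀) (Dx (f1 i) z) := ⟨hz₀neg.le, hzpos.le⟩
        obtain ⟨w, hw, hw0⟩ := hIV h0
        exact hPne w hw hw0
      have hcore := BWRCore.core (l i) (r i) (fun x => b i (1 - x)) (fun x => t i (1 - x))
        (fun w => 1 - f1 i w) (f2 i)
        (hl i) (hr i) ((hb i).comp (contDiff_const.sub contDiff_id))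
        ((ht i).comp (contDiff_const.sub contDiff_id)) (hlr i)
        (fun x hx => hbt i (1 - x) ⟨by linarith [hx.1, hx.2], by linarith [hx.1, hx.2]⟩)
        (hEQ i)
        (by
          intro p hp
          have hp1 : p.1 ∈ Set.Icc (0:ℝ) 1 := hp.1
          have hmem : ((1 - p.1, p.2) : ℝ × ℝ) ∈ Sstrip b t i := by
            simp only [Sstrip, Set.mem_setOf_eq, Set.mem_Icc]
            refine ⟨⟨by linarith [hp1.1, hp1.2], by linarith [hp1.1, hp1.2]⟩, hp.2.1, hp.2.2⟩
          have hQ := hSQ i hmem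
          exact Set.mem_prod.mpr ⟨hp1, (Set.mem_prod.mp hQ).2⟩)
        ((contDiff_const.sub hf1C).prodMk hf2C)
        (by
          intro a ha a' ha' h
          have h1 : 1 - f1 i a = 1 - f1 i a' := congrArg Prod.fst h
          have h2 : f2 i a = f2 i a' := congrArg Prod.snd h
          exact hfinj i ha ha' (by
            show ((f1 i a, f2 i a) : ℝ × ℝ) = (f1 i a', f2 i a')
            rw [Prod.mk.injEq]
            exact ⟨by linarith, h2⟩)
        )
        (by
          ext p
          constructor
          · rintro ⟨w, hw, rfl⟩
            have hS : fv f1 f2 i w ∈ Sstrip b t i := by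
              rw [← hfim i]; exact Set.mem_image_of_mem _ hw
            obtain ⟨hS1, hS2, hS3⟩ := hS
            have hS1' : f1 i w ∈ Set.Icc (0:ℝ) 1 := hS1
            simp only [Set.mem_setOf_eq, Set.mem_Icc, sub_sub_cancel]
            exact ⟨⟨by linarith [hS1'.1, hS1'.2], by linarith [hS1'.1, hS1'.2]⟩, hS2, hS3⟩
          · intro hp
            have hp1 : p.1 ∈ Set.Icc (0:ℝ) 1 := hp.1
            have hmem : ((1 - p.1, p.2) : ℝ × ℝ) ∈ Sstrip b t i := by
              simp only [Sstrip, Set.mem_setOf_eq, Set.mem_Icc]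
              refine ⟨⟨by linarith [hp1.1, hp1.2], by linarith [hp1.1, hp1.2]⟩, hp.2.1, hp.2.2⟩
            rw [← hfim i] at hmem
            obtain ⟨w, hw, hfv⟩ := hmem
            refine ⟨w, hw, ?_⟩
            have h1 : f1 i w = 1 - p.1 := congrArg Prod.fst hfv
            have h2 : f2 i w = p.2 := congrArg Prod.snd hfv
            show ((1 - f1 i w, f2 i w) : ℝ × ℝ) = p
            rw [h1, h2]
            rw [Prod.mk.injEq]
            exact ⟨by ring, rfl⟩)
        (by
          intro z hz
          rw [BWRMain.Dx_const_sub (f1 i) z (hf1d z) 1, BWRMain.Dy_const_sub (f1 i) z (hf1d z) 1]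
          intro h
          exact hdet z hz (by linarith)
        )
        (by
          intro z hz
          rw [BWRMain.Dx_const_sub (f1 i) z (hf1d z) 1]
          linarith [hneg z hz])
      intro y hy
      obtain ⟨h1, h2⟩ := hcore y hy
      have h1' : f1 i (r i y, y) = 0 := by linarith
      have h2' : f1 i (l i y, y) = 1 := by linarith
      rw [h1', h2']
      norm_num
  -- mean value theorem on each fiber
  have hmvt : ∀ y ∈ Set.Icc (0:ℝ) 1, ∃ ξ : ℝ, ((ξ, y) : ℝ × ℝ) ∈ Erect l r i ∧
      |Dx (f1 i) (ξ, y)| * (r i y - l i y) = 1 := by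
    intro y hy
    have hab := hlr i y hy
    have hcont : ContinuousOn (fun x => f1 i (x, y)) (Set.Icc (l i y) (r i y)) :=
      (hf1d.continuous.comp (continuous_id.prodMk continuous_const)).continuousOn
    have hderiv : ∀ x ∈ Set.Ioo (l i y) (r i y),
        HasDerivAt (fun x => f1 i (x, y)) (Dx (f1 i) (x, y)) x :=
      fun x _ => BWR2.hasDerivAt_horiz (hf1d (x, y))
    obtain ⟨ξ, hξ, hslope⟩ := exists_hasDerivAt_eq_slope (fun x => f1 i (x, y))
      (fun x => Dx (f1 i) (x, y)) hab hcont hderiv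
    refine ⟨ξ, ⟨hy, hξ.1.le, hξ.2.le⟩, ?_⟩
    rw [hslope, abs_div, abs_of_pos (by linarith : (0:ℝ) < r i y - l i y), key y hy]
    rw [one_div, inv_mul_cancel₀ (by linarith : r i y - l i y ≠ 0)]
  -- distortion bound for Dx f1
  have hP1 : ContDiff ℝ 1 (Dx (f1 i)) := by
    have heq : Dx (f1 i) = fun z => fderiv ℝ (f1 i) z ((1 : ℝ), (0 : ℝ)) :=
      funext fun z => BWR.Dx_eq (hf1d z)
    rw [heq]
    exact (hf1C.fderiv_right (m := 1) (by norm_num : (1 : WithTop ℕ∞) + 1 ≤ 2)).clm_apply contDiff_const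
  have hDxbound : ∀ z ∈ Erect l r i, |Dx (Dx (f1 i)) z| ≤ C₀ * |Dx (f1 i) z| := by
    intro z hz
    refine le_trans ?_ (hD2 i z hz)
    exact le_max_of_le_left (le_max_of_le_left (le_max_left _ _))
  have hDybound : ∀ z ∈ Erect l r i, |Dy (Dx (f1 i)) z| ≤ C₀ * |Dx (f1 i) z| := by
    intro z hz
    refine le_trans ?_ (hD2 i z hz)
    exact le_max_of_le_left (le_max_of_le_left (le_max_right _ _))
  have hdist := BWRDist.distortion (l i) (r i) (Dx (f1 i)) C₀ hC₀.le
    ((hl i).differentiable one_ne_zero) (fun y => (hl' i y).trans hα1.le)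
    (fun y hy => (hlr i y hy).le) (hEQ i) (hP1.differentiable one_ne_zero) hPne
    hDxbound hDybound
  -- final assembly
  obtain ⟨ξ₁, hξ₁E, hξ₁⟩ := hmvt z₁.2 hz₁.1
  obtain ⟨ξ₂, hξ₂E, hξ₂⟩ := hmvt z₂.2 hz₂.1
  have hcomp := hdist ((ξ₁, z₁.2) : ℝ × ℝ) hξ₁E ((ξ₂, z₂.2) : ℝ × ℝ) hξ₂E
  have hw₁ : (0:ℝ) < r i z₁.2 - l i z₁.2 := by linarith [hlr i z₁.2 hz₁.1]
  have hw₂ : (0:ℝ) < r i z₂.2 - l i z₂.2 := by linarith [hlr i z₂.2 hz₂.1]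
  have ha₁ : (0:ℝ) < |Dx (f1 i) ((ξ₁, z₁.2) : ℝ × ℝ)| := abs_pos.mpr (hPne _ hξ₁E)
  have ha₂ : (0:ℝ) < |Dx (f1 i) ((ξ₂, z₂.2) : ℝ × ℝ)| := abs_pos.mpr (hPne _ hξ₂E)
  have hEx : (0:ℝ) < Real.exp (4 * C₀) := Real.exp_pos _
  nlinarith [mul_pos hw₁ hw₂, mul_pos ha₁ hw₂,
    mul_le_mul_of_nonneg_right hcomp (mul_pos hw₁ hw₂).le]
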